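/- Let g_1,…,g_d : [0,1] → ℝ^n be Lipschitz paths, with components g_j = (g_{1,j},…,g_{n,j}), and define x : [0,1]^d → ℝ^n by x(s_1,…,s_d) := Σ_{j=1}^d g_j(s_j), so x ∈ Lip(□^d, ℝ^n). Then for every m ≥ 1 and every level-m index (P,π) ∈ O_{d,n}^m × Σ_m^d: Φ_m^{P,π}(x) = Σ over σ = (σ_1,…,σ_m) ∈ Σ_d^m of (∏_{i=1}^m sign(σ_i)) · ∏_{j=1}^d S_m^{Q(P,π,σ,j)}(g_j), where Q(P,π,σ,j) ∈ {1,…,n}^m is the multi-index whose i-th entry is P_{π_j(i)}(σ_{π_j(i)}^{-1}(j)). -/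

import Mathlib

open MeasureTheory

open scoped Classical

noncomputable section

/-- The unit cube `[0,1]^d` as a subset of `Fin d → ℝ`. -/
def unitCube (d : ℕ) : Set (Fin d → ℝ) := Set.Icc 0 1

/-- Lipschitz condition with constant `L`, with respect to Euclidean norms. -/
def EuclidLip {d n : ℕ} (L : ℝ) (x : (Fin d → ℝ) → Fin n → ℝ) : Prop :=
  ∀ s t : Fin d → ℝ,
    Real.sqrt (∑ k, (x s k - x t k) ^ 2) ≤ L * Real.sqrt (∑ j, (s j - t j) ^ 2)

/-- Lipschitz map. -/
def IsLipMap {d n : ℕ} (x : (Fin d → ℝ) → Fin n → ℝ) : Prop :=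
  ∃ L : ℝ, EuclidLip L x

/-- The Jacobian minor `J[x_P](s)`: the determinant of the `d × d` matrix
with `(i,j)` entry `∂ x_{P i} / ∂ s_j (s)`. -/
def jacobianMinor {d n : ℕ} (x : (Fin d → ℝ) → Fin n → ℝ) (P : Fin d → Fin n)
    (s : Fin d → ℝ) : ℝ :=
  (Matrix.of fun i j : Fin d => fderiv ℝ (fun t => x t (P i)) s (Pi.single j 1)).det

/-- The permuted `m`-simplex `Δ^m_π(a,b)`. -/
def permSimplex {m : ℕ} (π : Equiv.Perm (Fin m)) (a b : ℝ) : Set (Fin m → ℝ) :=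
  {u | (∀ i, u i ∈ Set.Icc a b) ∧ StrictMono fun i => u (π i)}

/-- The integration domain `D^{m,d}_π(a,b) = Δ^m_{π 1}(a₁,b₁) × ⋯ × Δ^m_{π d}(a_d,b_d)`. -/
def intDomain {m d : ℕ} (π : Fin d → Equiv.Perm (Fin m)) (a b : Fin d → ℝ) :
    Set (Fin m → Fin d → ℝ) :=
  {t | ∀ j, (fun i => t i j) ∈ permSimplex (π j) (a j) (b j)}

/-- The restricted mapping space monomial `Φ_m^{P,π}(x)_{a,b}`. -/
def msMonomialOn {d n m : ℕ} (x : (Fin d → ℝ) → Fin n → ℝ)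
    (P : Fin m → Fin d → Fin n) (π : Fin d → Equiv.Perm (Fin m))
    (a b : Fin d → ℝ) : ℝ :=
  ∫ t in intDomain π a b, ∏ i, jacobianMinor x (P i) (t i)

/-- The mapping space monomial `Φ_m^{P,π}(x)`. -/
def msMonomial {d n m : ℕ} (x : (Fin d → ℝ) → Fin n → ℝ)
    (P : Fin m → Fin d → Fin n) (π : Fin d → Equiv.Perm (Fin m)) : ℝ :=
  msMonomialOn x P π (fun _ => 0) (fun _ => 1)

/-- Lipschitz path (Euclidean norm on the codomain). -/
def IsLipPath {n : ℕ} (g : ℝ → Fin n → ℝ) : Prop :=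
  ∃ L : ℝ, ∀ u v : ℝ, Real.sqrt (∑ k, (g u k - g v k) ^ 2) ≤ L * |u - v|

/-- The path signature monomial `S_m^Q(g) = ∫_{0 ≤ u₁ < ⋯ < u_m ≤ 1} ∏ g'_{Q i}(u_i) du`. -/
def pathSig {n : ℕ} (m : ℕ) (g : ℝ → Fin n → ℝ) (Q : Fin m → Fin n) : ℝ :=
  ∫ u in permSimplex (1 : Equiv.Perm (Fin m)) 0 1,
    ∏ i, deriv (fun v => g v (Q i)) (u i)

/-! ### Auxiliary lemmas -/


/-- Fubini for transposed doubly-indexed pi integrals. -/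
lemma transpose_integral :
    ∀ (d : ℕ) {m : ℕ} (G : Fin d → (Fin m → ℝ) → ℝ),
      (∫ t : Fin m → Fin d → ℝ, ∏ j, G j (fun i => t i j)) = ∏ j, ∫ u : Fin m → ℝ, G j u := by
  intro d
  induction d with
  | zero =>
    intro m G
    simp [volume_pi, Measure.pi_univ, measureReal_def]
  | succ d ih =>
    intro m G
    set Ψ : (Fin m → Fin (d+1) → ℝ) ≃ᵐ (Fin m → ℝ) × (Fin m → Fin d → ℝ) :=
      (MeasurableEquiv.piCongrRight fun _ : Fin m =>
        MeasurableEquiv.piFinSuccAbove (fun _ : Fin (d+1) => ℝ) 0).trans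
        (MeasurableEquiv.arrowProdEquivProdArrow ℝ (Fin d → ℝ) (Fin m)) with hΨdef
    have hΨ : MeasurePreserving (⇑Ψ) volume volume := by
      have h1 := volume_preserving_pi
        (fun _ : Fin m => volume_preserving_piFinSuccAbove (fun _ : Fin (d+1) => ℝ) 0)
      have h2 := volume_measurePreserving_arrowProdEquivProdArrow ℝ (Fin d → ℝ) (Fin m)
      exact h2.comp h1
    calc ∫ t : Fin m → Fin (d+1) → ℝ, ∏ j, G j (fun i => t i j)
        = ∫ t : Fin m → Fin (d+1) → ℝ,
            (fun z : (Fin m → ℝ) × (Fin m → Fin d → ℝ) =>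
              G 0 z.1 * ∏ j : Fin d, G j.succ (fun i => z.2 i j)) (Ψ t) := by
          refine integral_congr_ae (Filter.Eventually.of_forall fun t => ?_)
          show ∏ j, G j (fun i => t i j)
              = G 0 (fun i => t i 0) *
                  ∏ j : Fin d, G j.succ (fun i => t i ((0 : Fin (d+1)).succAbove j))
          rw [Fin.prod_univ_succ]
          simp [Fin.succAbove_zero]
      _ = ∫ z : (Fin m → ℝ) × (Fin m → Fin d → ℝ),
            G 0 z.1 * ∏ j : Fin d, G j.succ (fun i => z.2 i j) := hΨ.integral_comp'
            (fun z : (Fin m → ℝ) × (Fin m → Fin d → ℝ) =>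
              G 0 z.1 * ∏ j : Fin d, G j.succ fun i => z.2 i j)
      _ = (∫ a : Fin m → ℝ, G 0 a) *
            ∫ b : Fin m → Fin d → ℝ, ∏ j : Fin d, G j.succ (fun i => b i j) := by
          rw [Measure.volume_eq_prod]
          exact integral_prod_mul (f := G 0)
            (g := fun b : Fin m → Fin d → ℝ => ∏ j : Fin d, G j.succ fun i => b i j)
      _ = ∏ j, ∫ u : Fin m → ℝ, G j u := by
          rw [ih (fun j => G j.succ), Fin.prod_univ_succ]

lemma measurableSet_permSimplex {m : ℕ} (π : Equiv.Perm (Fin m)) (a b : ℝ) :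
    MeasurableSet (permSimplex π a b) := by
  have h : permSimplex π a b =
      (⋂ i, (fun u : Fin m → ℝ => u i) ⁻¹' Set.Icc a b) ∩
        ⋂ (i : Fin m) (i' : Fin m) (_ : i < i'), {u : Fin m → ℝ | u (π i) < u (π i')} := by
    ext u
    simp only [permSimplex, Set.mem_setOf_eq, Set.mem_inter_iff, Set.mem_iInter,
      Set.mem_preimage]
    constructor
    · rintro ⟨h1, h2⟩
      exact ⟨h1, fun i i' hii => h2 hii⟩
    · rintro ⟨h1, h2⟩
      exact ⟨h1, fun i i' hii => h2 i i' hii⟩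
  rw [h]
  exact (MeasurableSet.iInter fun i => (measurable_pi_apply i) measurableSet_Icc).inter
    (MeasurableSet.iInter fun i => MeasurableSet.iInter fun i' => MeasurableSet.iInter fun _ =>
      measurableSet_lt (measurable_pi_apply _) (measurable_pi_apply _))

lemma measurableSet_intDomain {m d : ℕ} (π : Fin d → Equiv.Perm (Fin m)) (a b : Fin d → ℝ) :
    MeasurableSet (intDomain π a b) := by
  have h : intDomain π a b =
      ⋂ j, (fun t : Fin m → Fin d → ℝ => fun i => t i j) ⁻¹' permSimplex (π j) (a j) (b j) := by
    ext t; simp [intDomain, Set.mem_iInter]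
  rw [h]
  exact MeasurableSet.iInter fun j =>
    (measurable_pi_lambda _ fun i => (measurable_pi_apply j).comp (measurable_pi_apply i))
      (measurableSet_permSimplex _ _ _)

lemma setIntegral_permSimplex_comp {m : ℕ} (π : Equiv.Perm (Fin m)) (h : Fin m → ℝ → ℝ) :
    (∫ u in permSimplex π 0 1, ∏ i, h i (u i))
      = ∫ u in permSimplex (1 : Equiv.Perm (Fin m)) 0 1, ∏ i, h (π i) (u i) := by
  classical
  set T : (Fin m → ℝ) ≃ᵐ (Fin m → ℝ) :=
    MeasurableEquiv.piCongrLeft (fun _ : Fin m => ℝ) π with hTdef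
  have hT : MeasurePreserving (⇑T) volume volume :=
    volume_measurePreserving_piCongrLeft _ π
  have hTapp : ∀ (v : Fin m → ℝ) (i : Fin m), T v (π i) = v i := by
    intro v i
    show (Equiv.piCongrLeft (fun _ : Fin m => ℝ) π) v (π i) = v i
    exact Equiv.piCongrLeft_apply_apply (fun _ : Fin m => ℝ) π v i
  rw [← integral_indicator (measurableSet_permSimplex π 0 1),
    ← integral_indicator (measurableSet_permSimplex 1 0 1)]
  rw [← hT.integral_comp'
    (fun u => Set.indicator (permSimplex π 0 1) (fun u => ∏ i, h i (u i)) u)]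
  refine integral_congr_ae (Filter.Eventually.of_forall fun v => ?_)
  have hmem : T v ∈ permSimplex π 0 1 ↔ v ∈ permSimplex (1 : Equiv.Perm (Fin m)) 0 1 := by
    constructor
    · rintro ⟨h1, h2⟩
      refine ⟨fun i => by simpa [hTapp] using h1 (π i), ?_⟩
      have : (fun i => T v (π i)) = v := funext fun i => hTapp v i
      simpa [this] using h2
    · rintro ⟨h1, h2⟩
      refine ⟨fun i => ?_, ?_⟩
      · have := h1 (π.symm i)
        simpa [hTapp, Equiv.apply_symm_apply] using
          (by rw [← π.apply_symm_apply i, hTapp]; exact this : T v i ∈ Set.Icc (0:ℝ) 1)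
      · have : (fun i => T v (π i)) = v := funext fun i => hTapp v i
        rw [this]
        simpa using h2
  have hval : (∏ i, h i (T v i)) = ∏ i, h (π i) (v i) := by
    rw [← Equiv.prod_comp π (fun i => h i (T v i))]
    exact Finset.prod_congr rfl fun i _ => by rw [hTapp]
  show (permSimplex π 0 1).indicator (fun u => ∏ i, h i (u i)) (T v)
      = (permSimplex 1 0 1).indicator (fun u => ∏ i, h (π i) (u i)) v
  by_cases hv : v ∈ permSimplex (1 : Equiv.Perm (Fin m)) 0 1
  · rw [Set.indicator_of_mem (hmem.mpr hv), Set.indicator_of_mem hv, hval]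
  · rw [Set.indicator_of_notMem (fun hc => hv (hmem.mp hc)), Set.indicator_of_notMem hv]

lemma lipschitz_component {n : ℕ} {g : ℝ → Fin n → ℝ} (hg : IsLipPath g) (k : Fin n) :
    ∃ C : NNReal, LipschitzWith C fun v => g v k := by
  obtain ⟨L, hL⟩ := hg
  refine ⟨L.toNNReal, LipschitzWith.of_dist_le_mul fun u v => ?_⟩
  have h1 : |g u k - g v k| ≤ Real.sqrt (∑ k', (g u k' - g v k') ^ 2) := by
    rw [← Real.sqrt_sq_eq_abs]
    exact Real.sqrt_le_sqrt (Finset.single_le_sum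
      (fun k' _ => sq_nonneg (g u k' - g v k')) (Finset.mem_univ k))
  rw [Real.dist_eq, Real.dist_eq]
  calc |g u k - g v k| ≤ Real.sqrt (∑ k', (g u k' - g v k') ^ 2) := h1
    _ ≤ L * |u - v| := hL u v
    _ ≤ (L.toNNReal : ℝ) * |u - v| :=
        mul_le_mul_of_nonneg_right (Real.le_coe_toNNReal L) (abs_nonneg _)

lemma abs_deriv_le_of_lipschitz {C : NNReal} {φ : ℝ → ℝ} (h : LipschitzWith C φ) (v : ℝ) :
    |deriv φ v| ≤ C := by
  have h1 : deriv φ v = fderiv ℝ φ v 1 := (fderiv_apply_one_eq_deriv).symm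
  have h2 : ‖fderiv ℝ φ v‖ ≤ C := norm_fderiv_le_of_lipschitz ℝ h
  calc |deriv φ v| = ‖fderiv ℝ φ v 1‖ := by rw [h1]; rfl
    _ ≤ ‖fderiv ℝ φ v‖ * ‖(1:ℝ)‖ := (fderiv ℝ φ v).le_opNorm 1
    _ ≤ C := by simpa using h2

lemma fderiv_sum_eval {d n : ℕ} (g : Fin d → ℝ → Fin n → ℝ) (k : Fin n) (s : Fin d → ℝ)
    (hdiff : ∀ j, DifferentiableAt ℝ (fun v => g j v k) (s j)) (b : Fin d) :
    fderiv ℝ (fun t : Fin d → ℝ => ∑ j, g j (t j) k) s (Pi.single b 1)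
      = deriv (fun v => g b v k) (s b) := by
  have H : HasFDerivAt (fun t : Fin d → ℝ => ∑ j, g j (t j) k)
      (∑ j, (deriv (fun v => g j v k) (s j)) •
        (ContinuousLinearMap.proj j : (Fin d → ℝ) →L[ℝ] ℝ)) s := by
    apply HasFDerivAt.fun_sum
    intro j _
    have h1 : HasDerivAt (fun v => g j v k) (deriv (fun v => g j v k) (s j)) (s j) :=
      (hdiff j).hasDerivAt
    have h2 : HasFDerivAt (Function.eval j : (Fin d → ℝ) → ℝ)
        (ContinuousLinearMap.proj j : (Fin d → ℝ) →L[ℝ] ℝ) s :=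
      (ContinuousLinearMap.proj j : (Fin d → ℝ) →L[ℝ] ℝ).hasFDerivAt
    exact h1.comp_hasFDerivAt s h2
  rw [H.fderiv]
  simp [ContinuousLinearMap.proj_apply, Pi.single_apply]

lemma det_expand {d : ℕ} (M : Matrix (Fin d) (Fin d) ℝ) :
    M.det = ∑ σ : Equiv.Perm (Fin d), ((Equiv.Perm.sign σ : ℤ) : ℝ) * ∏ j, M (σ⁻¹ j) j := by
  rw [Matrix.det_apply]
  conv_rhs => rw [← Equiv.sum_comp (Equiv.inv (Equiv.Perm (Fin d)))
    (fun σ => ((Equiv.Perm.sign σ : ℤ) : ℝ) * ∏ j, M (σ⁻¹ j) j)]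
  refine Finset.sum_congr rfl fun σ _ => ?_
  simp [Equiv.inv_apply, Equiv.Perm.sign_inv, Units.smul_def, zsmul_eq_mul]

lemma ae_coord {m d : ℕ} {p : Fin d → ℝ → Prop} (hp : ∀ j, ∀ᵐ v : ℝ, p j v) :
    ∀ᵐ t : Fin m → Fin d → ℝ, ∀ i j, p j (t i j) := by
  rw [ae_all_iff]
  intro i
  rw [ae_all_iff]
  intro j
  have h0 : volume {v : ℝ | ¬ p j v} = 0 := by
    have := hp j; rwa [ae_iff] at this
  rw [ae_iff]
  have heq : {t : Fin m → Fin d → ℝ | ¬ p j (t i j)} =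
      Function.eval i ⁻¹' (Function.eval j ⁻¹' {v : ℝ | ¬ p j v}) := rfl
  have inner : (volume : Measure (Fin d → ℝ)) (Function.eval j ⁻¹' {v : ℝ | ¬ p j v}) = 0 := by
    rw [volume_pi]
    exact Measure.pi_eval_preimage_null _ h0
  rw [heq, volume_pi]
  exact Measure.pi_eval_preimage_null _ inner

lemma jac_formula {d n : ℕ} (g : Fin d → ℝ → Fin n → ℝ) (Q : Fin d → Fin n) (s : Fin d → ℝ)
    (hdiff : ∀ j k, DifferentiableAt ℝ (fun v => g j v k) (s j)) :
    jacobianMinor (fun s k => ∑ j, g j (s j) k) Q s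
      = ∑ σ : Equiv.Perm (Fin d), ((Equiv.Perm.sign σ : ℤ) : ℝ) *
          ∏ j, deriv (fun v => g j v (Q (σ⁻¹ j))) (s j) := by
  have hM : (Matrix.of fun a b : Fin d =>
      fderiv ℝ (fun t => (fun (s : Fin d → ℝ) k => ∑ j, g j (s j) k) t (Q a)) s (Pi.single b 1))
      = Matrix.of fun a b : Fin d => deriv (fun v => g b v (Q a)) (s b) := by
    ext a b
    exact fderiv_sum_eval g (Q a) s (fun j => hdiff j (Q a)) b
  unfold jacobianMinor
  rw [hM, det_expand]
  simp only [Matrix.of_apply]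

/-- The `σ`-term in the expansion. -/
def sigTerm {d n m : ℕ} (g : Fin d → ℝ → Fin n → ℝ) (P : Fin m → Fin d → Fin n)
    (σ : Fin m → Equiv.Perm (Fin d)) (t : Fin m → Fin d → ℝ) : ℝ :=
  ∏ i, (((Equiv.Perm.sign (σ i) : ℤ) : ℝ) *
    ∏ j, deriv (fun v => g j v (P i ((σ i)⁻¹ j))) (t i j))

/-- for `x(s) = Σ_j g_j(s_j)`, the mapping space monomials decompose
into path signature monomials of the `g_j`. -/
theorem stmt11 (d n m : ℕ) (hd : 1 ≤ d) (hn : d ≤ n) (hm : 1 ≤ m)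
    (g : Fin d → ℝ → Fin n → ℝ) (hg : ∀ j, IsLipPath (g j))
    (P : Fin m → Fin d → Fin n) (hP : ∀ i, StrictMono (P i))
    (π : Fin d → Equiv.Perm (Fin m)) :
    msMonomial (fun s k => ∑ j, g j (s j) k) P π =
      ∑ σ : Fin m → Equiv.Perm (Fin d),
        (∏ i, ((Equiv.Perm.sign (σ i) : ℤ) : ℝ)) *
          ∏ j, pathSig m (g j) (fun i => P (π j i) ((σ (π j i)).symm j)) := by
  classical
  have hCex : ∀ (j : Fin d) (k : Fin n), ∃ C : NNReal, LipschitzWith C fun v => g j v k :=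
    fun j k => lipschitz_component (hg j) k
  choose C hC using hCex
  have hD : MeasurableSet (intDomain π (fun _ : Fin d => (0:ℝ)) (fun _ => 1)) :=
    measurableSet_intDomain _ _ _
  set D : Set (Fin m → Fin d → ℝ) := intDomain π (fun _ => 0) (fun _ => 1) with hDdef
  have hS : ∀ j, MeasurableSet (permSimplex (π j) (0:ℝ) 1) :=
    fun j => measurableSet_permSimplex _ _ _
  -- D has finite volume
  have hDsub : D ⊆ Set.pi Set.univ
      (fun _ : Fin m => Set.pi Set.univ fun _ : Fin d => Set.Icc (0:ℝ) 1) := by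
    intro t ht
    intro i _ j _
    exact (ht j).1 i
  have hvolD : volume D < ⊤ := by
    refine lt_of_le_of_lt (measure_mono hDsub) ?_
    have hbox : (volume : Measure (Fin m → Fin d → ℝ)) (Set.pi Set.univ
        (fun _ : Fin m => Set.pi Set.univ fun _ : Fin d => Set.Icc (0:ℝ) 1)) = 1 := by
      rw [volume_pi, Measure.pi_pi]
      have hin : (volume : Measure (Fin d → ℝ))
          (Set.pi Set.univ fun _ : Fin d => Set.Icc (0:ℝ) 1) = 1 := by
        rw [volume_pi, Measure.pi_pi]
        simp [Real.volume_Icc]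
      calc (∏ _i : Fin m, (volume : Measure (Fin d → ℝ))
              (Set.pi Set.univ fun _ : Fin d => Set.Icc (0:ℝ) 1))
          = ∏ _i : Fin m, 1 := Finset.prod_congr rfl fun i _ => hin
        _ = 1 := Finset.prod_const_one
    rw [hbox]
    exact ENNReal.one_lt_top
  haveI hfin : IsFiniteMeasure (volume.restrict D) :=
    ⟨by rwa [Measure.restrict_apply_univ]⟩
  -- a.e. differentiability
  have hae : ∀ᵐ t : Fin m → Fin d → ℝ,
      ∀ i j, ∀ k, DifferentiableAt ℝ (fun w => g j w k) (t i j) := by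
    refine ae_coord (p := fun j v => ∀ k, DifferentiableAt ℝ (fun w => g j w k) v) ?_
    intro j
    rw [ae_all_iff]
    intro k
    exact (hC j k).ae_differentiableAt
  -- measurability and integrability of the terms
  have hmeasTerm : ∀ σ : Fin m → Equiv.Perm (Fin d), Measurable (sigTerm g P σ) := by
    intro σ
    refine Finset.measurable_prod _ fun i _ => ?_
    refine Measurable.const_mul ?_ _
    refine Finset.measurable_prod _ fun j _ => ?_
    exact (measurable_deriv _).comp ((measurable_pi_apply j).comp (measurable_pi_apply i))
  have hboundTerm : ∀ (σ : Fin m → Equiv.Perm (Fin d)) (t : Fin m → Fin d → ℝ),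
      |sigTerm g P σ t| ≤ ∏ i, ∏ j, (C j (P i ((σ i)⁻¹ j)) : ℝ) := by
    intro σ t
    rw [sigTerm, Finset.abs_prod]
    refine Finset.prod_le_prod (fun i _ => abs_nonneg _) (fun i _ => ?_)
    rw [abs_mul]
    have hsign : |((Equiv.Perm.sign (σ i) : ℤ) : ℝ)| = 1 := by
      rcases Int.units_eq_one_or (Equiv.Perm.sign (σ i)) with hs | hs <;> rw [hs] <;> norm_num
    rw [hsign, one_mul, Finset.abs_prod]
    refine Finset.prod_le_prod (fun j _ => abs_nonneg _) (fun j _ => ?_)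
    exact abs_deriv_le_of_lipschitz (hC j (P i ((σ i)⁻¹ j))) _
  have hint : ∀ σ : Fin m → Equiv.Perm (Fin d), IntegrableOn (sigTerm g P σ) D := by
    intro σ
    refine Integrable.mono'
      (integrable_const (∏ i, ∏ j, (C j (P i ((σ i)⁻¹ j)) : ℝ)))
      (hmeasTerm σ).aestronglyMeasurable
      (Filter.Eventually.of_forall fun t => ?_)
    simpa [Real.norm_eq_abs] using hboundTerm σ t
  -- Step A : a.e. expansion of the integrand
  have stepA : msMonomial (fun s k => ∑ j, g j (s j) k) P π
      = ∫ t in D, ∑ σ : Fin m → Equiv.Perm (Fin d), sigTerm g P σ t := by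
    unfold msMonomial msMonomialOn
    refine setIntegral_congr_ae hD ?_
    filter_upwards [hae] with t ht _
    have hjac : ∀ i : Fin m, jacobianMinor (fun s k => ∑ j, g j (s j) k) (P i) (t i)
        = ∑ σi : Equiv.Perm (Fin d), ((Equiv.Perm.sign σi : ℤ) : ℝ) *
            ∏ j, deriv (fun v => g j v (P i (σi⁻¹ j))) (t i j) :=
      fun i => jac_formula g (P i) (t i) (fun j k => ht i j k)
    rw [Finset.prod_congr rfl (fun i _ => hjac i), Finset.prod_univ_sum]
    rw [Fintype.piFinset_univ]
    rfl
  rw [stepA]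
  rw [integral_finset_sum Finset.univ (fun σ _ => hint σ)]
  refine Finset.sum_congr rfl fun σ _ => ?_
  -- Step C : pull out the signs
  have stepC : (∫ t in D, sigTerm g P σ t)
      = (∏ i, ((Equiv.Perm.sign (σ i) : ℤ) : ℝ)) *
          ∫ t in D, ∏ i, ∏ j, deriv (fun v => g j v (P i ((σ i)⁻¹ j))) (t i j) := by
    rw [← integral_const_mul]
    refine integral_congr_ae (Filter.Eventually.of_forall fun t => ?_)
    rw [sigTerm, Finset.prod_mul_distrib]
  rw [stepC]
  congr 1
  -- Step D : factorize over columns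
  have stepD : (∫ t in D, ∏ i, ∏ j, deriv (fun v => g j v (P i ((σ i)⁻¹ j))) (t i j))
      = ∏ j, ∫ u in permSimplex (π j) 0 1,
          ∏ i, deriv (fun v => g j v (P i ((σ i)⁻¹ j))) (u i) := by
    rw [← integral_indicator hD]
    have hind : ∀ t : Fin m → Fin d → ℝ,
        D.indicator (fun t => ∏ i, ∏ j, deriv (fun v => g j v (P i ((σ i)⁻¹ j))) (t i j)) t
          = ∏ j, (permSimplex (π j) 0 1).indicator
              (fun u => ∏ i, deriv (fun v => g j v (P i ((σ i)⁻¹ j))) (u i))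
              (fun i => t i j) := by
      intro t
      by_cases ht : t ∈ D
      · rw [Set.indicator_of_mem ht, Finset.prod_comm]
        exact Finset.prod_congr rfl fun j _ => (Set.indicator_of_mem
          (show (fun i => t i j) ∈ permSimplex (π j) 0 1 from ht j)
          (fun u : Fin m → ℝ => ∏ i, deriv (fun v => g j v (P i ((σ i)⁻¹ j))) (u i))).symm
      · rw [Set.indicator_of_notMem ht]
        have hex : ∃ j, (fun i => t i j) ∉ permSimplex (π j) 0 1 := by
          by_contra hcon
          push_neg at hcon
          exact ht fun j => hcon j
        obtain ⟨j0, hj0⟩ := hex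
        exact (Finset.prod_eq_zero (Finset.mem_univ j0)
          (Set.indicator_of_notMem hj0 _)).symm
    calc (∫ t : Fin m → Fin d → ℝ, D.indicator
            (fun t => ∏ i, ∏ j, deriv (fun v => g j v (P i ((σ i)⁻¹ j))) (t i j)) t)
        = ∫ t : Fin m → Fin d → ℝ, ∏ j,
            (fun u => (permSimplex (π j) 0 1).indicator
              (fun u => ∏ i, deriv (fun v => g j v (P i ((σ i)⁻¹ j))) (u i)) u)
              (fun i => t i j) :=
          integral_congr_ae (Filter.Eventually.of_forall fun t => hind t)
      _ = ∏ j, ∫ u : Fin m → ℝ, (permSimplex (π j) 0 1).indicator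
            (fun u => ∏ i, deriv (fun v => g j v (P i ((σ i)⁻¹ j))) (u i)) u :=
          transpose_integral d _
      _ = ∏ j, ∫ u in permSimplex (π j) 0 1,
            ∏ i, deriv (fun v => g j v (P i ((σ i)⁻¹ j))) (u i) :=
          Finset.prod_congr rfl fun j _ => integral_indicator (hS j)
  rw [stepD]
  -- Step E : reindex each simplex integral
  refine Finset.prod_congr rfl fun j _ => ?_
  rw [setIntegral_permSimplex_comp (π j)
    (fun i => deriv (fun v => g j v (P i ((σ i)⁻¹ j))))]
  rfl


end
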